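/- Let K ⊆ L ⊆ M be a tower of fields such that the fixed field of the automorphism group G(M|K) = Aut_K(M) equals K. If the polynomial composite K + X·M[X] is a Noetherian ring, then M is a normal extension of L, and moreover L + X·M[X] is a Noetherian ring. -/

import Mathlib

/-- The polynomial composite `A + X·B[X]`: the subring of `B[X]` of polynomials
whose constant coefficient lies in `A`. -/
def Subring.composite {B : Type*} [CommRing B] (A : Subring B) : Subring (Polynomial B) where
  carrier := {f : Polynomial B | f.coeff 0 ∈ A}
  mul_mem' {f g} hf hg := by
    simp only [Set.mem_setOf_eq, Polynomial.mul_coeff_zero] at *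
    exact mul_mem hf hg
  one_mem' := by
    simp only [Set.mem_setOf_eq, Polynomial.coeff_one_zero]
    exact one_mem A
  add_mem' {f g} hf hg := by
    simp only [Set.mem_setOf_eq, Polynomial.coeff_add] at *
    exact add_mem hf hg
  zero_mem' := by
    simp only [Set.mem_setOf_eq, Polynomial.coeff_zero]
    exact zero_mem A
  neg_mem' {f} hf := by
    simp only [Set.mem_setOf_eq, Polynomial.coeff_neg] at *
    exact neg_mem hf

theorem Subring.mem_composite {B : Type*} [CommRing B] (A : Subring B) (f : Polynomial B) :
    f ∈ A.composite ↔ f.coeff 0 ∈ A := Iff.rfl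


open Polynomial in
/-- If `K + X·M[X]` is Noetherian, then `M` is finite-dimensional over `K`. -/
lemma FiniteDimensional.of_composite_noetherian (K M : Type*) [Field K] [Field M]
    [Algebra K M] (h : IsNoetherianRing ((algebraMap K M).range.composite)) :
    FiniteDimensional K M := by
  classical
  set R := (algebraMap K M).range.composite with hR
  -- the ideal of polynomials with zero constant coefficient
  let I : Ideal R :=
    { carrier := {f | (f : M[X]).coeff 0 = 0}
      add_mem' := fun {a b} ha hb => by
        simp only [Set.mem_setOf_eq] at *
        push_cast
        rw [Polynomial.coeff_add, ha, hb, add_zero]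
      zero_mem' := by simp
      smul_mem' := fun c f hf => by
        simp only [Set.mem_setOf_eq, smul_eq_mul] at *
        push_cast
        rw [Polynomial.mul_coeff_zero, hf, mul_zero] }
  obtain ⟨s, hs⟩ : I.FG := IsNoetherian.noetherian I
  have hsI : ∀ g ∈ s, (g : M[X]).coeff 0 = 0 := by
    intro g hg
    have : g ∈ I := hs ▸ Ideal.subset_span hg
    exact this
  -- the first coefficients of the generators span M over K
  have hspan : Submodule.span K ↑(s.image (fun g : R => (g : M[X]).coeff 1)) =
      (⊤ : Submodule K M) := by
    rw [eq_top_iff]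
    intro m _
    have hpR : (Polynomial.C m * X : M[X]) ∈ R := by
      rw [Subring.mem_composite, Polynomial.coeff_mul_X_zero]
      exact zero_mem _
    have hpI : (⟨Polynomial.C m * X, hpR⟩ : R) ∈ I := by
      show (Polynomial.C m * X : M[X]).coeff 0 = 0
      exact Polynomial.coeff_mul_X_zero _
    rw [← hs] at hpI
    rw [Ideal.span, Submodule.mem_span_finset] at hpI
    obtain ⟨c, -, hc⟩ := hpI
    have hcoeff : ∀ g ∈ s, ((c g • g : R) : M[X]).coeff 1
        = ((c g : M[X]).coeff 0) * ((g : M[X]).coeff 1) := by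
      intro g hg
      have : ((c g • g : R) : M[X]) = (c g : M[X]) * (g : M[X]) := rfl
      rw [this, Polynomial.coeff_mul]
      rw [show (Finset.HasAntidiagonal.antidiagonal 1 : Finset (ℕ × ℕ)) = {(0,1),(1,0)} from rfl]
      simp [hsI g hg]
    have hm : m = ∑ g ∈ s, ((c g : M[X]).coeff 0) * ((g : M[X]).coeff 1) := by
      have h1 : ((⟨Polynomial.C m * X, hpR⟩ : R) : M[X]).coeff 1 = m := by
        simp
      rw [← h1, ← hc]
      push_cast
      rw [Polynomial.finset_sum_coeff]
      exact Finset.sum_congr rfl hcoeff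
    rw [hm]
    apply Submodule.sum_mem
    intro g hg
    obtain ⟨k, hk⟩ := (c g).2
    rw [← hk, ← Algebra.smul_def]
    exact Submodule.smul_mem _ _ (Submodule.subset_span
      (Finset.mem_coe.mpr (Finset.mem_image_of_mem _ hg)))
  exact ⟨⟨_, hspan⟩⟩

open Polynomial in
/-- If `M` is finite-dimensional over `L`, then `L + X·M[X]` is Noetherian. -/
lemma composite_noetherian_of_finiteDimensional (L M : Type*) [Field L] [Field M]
    [Algebra L M] [FiniteDimensional L M] :
    IsNoetherianRing ((algebraMap L M).range.composite) := by
  classical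
  -- view the composite as an `L`-subalgebra of `M[X]`
  let A : Subalgebra L M[X] :=
    { ((algebraMap L M).range.composite).toSubsemiring with
      algebraMap_mem' := fun l => by
        show ((algebraMap L M[X]) l).coeff 0 ∈ (algebraMap L M).range
        rw [Polynomial.algebraMap_apply, Polynomial.coeff_C_zero]
        exact ⟨l, rfl⟩ }
  obtain ⟨s, hsspan⟩ : (⊤ : Submodule L M).FG := Module.Finite.fg_top (R := L) (M := M)
  set s' : Finset M := insert 1 s with hs'
  have hspan' : Submodule.span L (↑s' : Set M) = ⊤ := by
    rw [eq_top_iff, ← hsspan]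
    exact Submodule.span_mono (by simp [hs'])
  set t : Finset M[X] := s'.image (fun e => Polynomial.C e * X) with ht
  -- every `C m * X` lies in the adjoin
  have hCX : ∀ m : M, Polynomial.C m * X ∈ Algebra.adjoin L (↑t : Set M[X]) := by
    intro m
    have hm : m ∈ Submodule.span L (↑s' : Set M) := hspan' ▸ Submodule.mem_top
    rw [Submodule.mem_span_finset] at hm
    obtain ⟨c, -, hc⟩ := hm
    have : Polynomial.C m * X = ∑ e ∈ s', algebraMap L M[X] (c e) * (Polynomial.C e * X) := by
      rw [← hc]
      rw [map_sum, Finset.sum_mul]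
      apply Finset.sum_congr rfl
      intro e _
      rw [Algebra.smul_def, map_mul, Polynomial.algebraMap_apply]
      ring
    rw [this]
    apply Subalgebra.sum_mem
    intro e he
    exact Subalgebra.mul_mem _ (Subalgebra.algebraMap_mem _ _)
      (Algebra.subset_adjoin (Finset.mem_coe.mpr (Finset.mem_image_of_mem _ he)))
  have hX : (X : M[X]) ∈ Algebra.adjoin L (↑t : Set M[X]) := by
    have := hCX 1
    rwa [map_one, one_mul] at this
  -- every `g * X` lies in the adjoin
  have hkey : ∀ g : M[X], g * X ∈ Algebra.adjoin L (↑t : Set M[X]) := by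
    intro g
    induction g using Polynomial.induction_on' with
    | add p q hp hq =>
      rw [add_mul]
      exact Subalgebra.add_mem _ hp hq
    | monomial n m =>
      rw [← Polynomial.C_mul_X_pow_eq_monomial, mul_comm (Polynomial.C m) (X ^ n), mul_assoc]
      exact Subalgebra.mul_mem _ (Subalgebra.pow_mem _ hX n) (hCX m)
  have hadj : Algebra.adjoin L (↑t : Set M[X]) = A := by
    apply le_antisymm
    · apply Algebra.adjoin_le
      intro f hf
      simp only [ht, Finset.coe_image, Set.mem_image] at hf
      obtain ⟨e, _, rfl⟩ := hf
      have : (Polynomial.C e * X : M[X]).coeff 0 ∈ (algebraMap L M).range := by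
        rw [Polynomial.coeff_mul_X_zero]; exact zero_mem _
      exact this
    · intro f hf
      have hf' : f.coeff 0 ∈ (algebraMap L M).range := hf
      obtain ⟨l, hl⟩ := hf'
      have : f = f.divX * X + Polynomial.C (f.coeff 0) := (Polynomial.divX_mul_X_add f).symm
      rw [this]
      apply Subalgebra.add_mem _ (hkey f.divX)
      rw [← hl, ← Polynomial.algebraMap_apply]
      exact Subalgebra.algebraMap_mem _ _
  have hAfg : A.FG := ⟨t, hadj⟩
  have hft : Algebra.FiniteType L A := (Subalgebra.fg_iff_finiteType A).mp hAfg
  have hnoeth : IsNoetherianRing A := Algebra.FiniteType.isNoetherianRing L A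
  exact isNoetherianRing_of_ringEquiv (↥A)
    { toFun := fun x => ⟨x.1, x.2⟩
      invFun := fun x => ⟨x.1, x.2⟩
      left_inv := fun _ => rfl
      right_inv := fun _ => rfl
      map_mul' := fun _ _ => rfl
      map_add' := fun _ _ => rfl }

/-- For a tower of fields `K ⊆ L ⊆ M` such that the fixed field of `G(M|K) = Aut_K(M)` is `K`:
if `K + X·M[X]` is Noetherian, then `M` is a normal extension of `L` and `L + X·M[X]` is
Noetherian. -/
theorem composite_tower_normal (K L M : Type*) [Field K] [Field L] [Field M]
    [Algebra K L] [Algebra L M] [Algebra K M] [IsScalarTower K L M]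
    (hfix : ∀ x : M, (∀ σ : M ≃ₐ[K] M, σ x = x) → ∃ k : K, algebraMap K M k = x)
    (h : IsNoetherianRing ((algebraMap K M).range.composite)) :
    Normal L M ∧ IsNoetherianRing ((algebraMap L M).range.composite) := by
  have hfd : FiniteDimensional K M := FiniteDimensional.of_composite_noetherian K M h
  have hfixed : IntermediateField.fixedField (⊤ : Subgroup (M ≃ₐ[K] M)) = ⊥ := by
    apply le_antisymm
    · intro x hx
      rw [IntermediateField.mem_bot]
      obtain ⟨k, hk⟩ := hfix x (fun σ => hx ⟨σ, Subgroup.mem_top σ⟩)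
      exact ⟨k, hk⟩
    · exact bot_le
  have hgal : IsGalois K M := IsGalois.of_fixedField_eq_bot K M hfixed
  have hnormal : Normal K M := hgal.to_normal
  have hnormalL : Normal L M := Normal.tower_top_of_normal K L M
  have hfdL : FiniteDimensional L M := FiniteDimensional.right K L M
  exact ⟨hnormalL, composite_noetherian_of_finiteDimensional L M⟩
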